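/- Let q ≥ 2 and suppose ε = Σ_{i=0}^{n} δ_i·q^i with n ≥ 1, |δ_i| ≤ 2q−2, |δ_n| = 1, and δ_{n−1} either zero or of the same sign as δ_n. Then |ε| ≥ 2 and ε has the same sign as δ_n. -/

import Mathlib

lemma tail_bound (q : ℤ) (hq : 2 ≤ q) (m : ℕ) (δ : ℕ → ℤ)
    (hD : ∀ i, i < m → |δ i| ≤ 2 * q - 2) :
    |∑ i ∈ Finset.range m, δ i * q ^ i| ≤ 2 * (q ^ m - 1) := by
  calc |∑ i ∈ Finset.range m, δ i * q ^ i|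
      ≤ ∑ i ∈ Finset.range m, |δ i * q ^ i| := Finset.abs_sum_le_sum_abs _ _
    _ ≤ ∑ i ∈ Finset.range m, (2 * q - 2) * q ^ i := by
        apply Finset.sum_le_sum
        intro i hi
        rw [abs_mul, abs_pow, abs_of_nonneg (by linarith : (0:ℤ) ≤ q)]
        exact mul_le_mul_of_nonneg_right (hD i (Finset.mem_range.mp hi))
          (pow_nonneg (by linarith) i)
    _ = 2 * ((∑ i ∈ Finset.range m, q ^ i) * (q - 1)) := by
        rw [Finset.sum_mul, Finset.mul_sum]
        exact Finset.sum_congr rfl (fun i _ => by ring)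
    _ = 2 * (q ^ m - 1) := by rw [geom_sum_mul]

/-- if `|δ n| = 1` and `δ (n-1)` is zero or has the same sign as
`δ n`, then `|ε| ≥ 2` and `ε` has the same sign as `δ n`. -/
theorem stmt_3 (q : ℤ) (hq : 2 ≤ q) (n : ℕ) (hn : 1 ≤ n) (δ : ℕ → ℤ)
    (hD : ∀ i, i ≤ n → |δ i| ≤ 2 * q - 2)
    (htop : |δ n| = 1)
    (hprev : δ (n - 1) = 0 ∨ (δ (n - 1)).sign = (δ n).sign) :
    2 ≤ |∑ i ∈ Finset.range (n + 1), δ i * q ^ i| ∧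
      (∑ i ∈ Finset.range (n + 1), δ i * q ^ i).sign = (δ n).sign := by
  obtain ⟨m, rfl⟩ : ∃ m, n = m + 1 := ⟨n - 1, by omega⟩
  simp only [Nat.add_sub_cancel] at hprev
  have hsum : ∑ i ∈ Finset.range (m + 1 + 1), δ i * q ^ i
      = (∑ i ∈ Finset.range m, δ i * q ^ i) + δ m * q ^ m + δ (m+1) * q ^ (m+1) := by
    rw [Finset.sum_range_succ, Finset.sum_range_succ]
  have hbd := tail_bound q hq m δ (fun i hi => hD i (by omega))
  have hpow : (1:ℤ) ≤ q ^ m := one_le_pow₀ (by linarith)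
  have habs := abs_le.mp hbd
  rcases abs_eq (by norm_num : (0:ℤ) ≤ 1) |>.mp htop with h1 | h1
  · have hdm : 0 ≤ δ m := by
      rcases hprev with h | h
      · omega
      · rw [h1] at h; simp at h
        exact le_of_lt h
    have hge : 2 ≤ ∑ i ∈ Finset.range (m + 1 + 1), δ i * q ^ i := by
      rw [hsum, h1]
      have h0 : 0 ≤ δ m * q ^ m := mul_nonneg hdm (by positivity)
      have hq1 : q ^ (m+1) = q * q ^ m := by ring
      have h2q : 2 * q ^ m ≤ q * q ^ m := mul_le_mul_of_nonneg_right hq (by positivity)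
      rw [hq1]; linarith [habs.1]
    refine ⟨by rw [abs_of_nonneg (by linarith)]; exact hge, ?_⟩
    rw [h1, show Int.sign 1 = 1 by decide, Int.sign_eq_one_iff_pos]
    linarith
  · have hdm : δ m ≤ 0 := by
      rcases hprev with h | h
      · omega
      · rw [h1] at h; simp at h
        exact le_of_lt h
    have hge : ∑ i ∈ Finset.range (m + 1 + 1), δ i * q ^ i ≤ -2 := by
      rw [hsum, h1]
      have h0 : δ m * q ^ m ≤ 0 := mul_nonpos_of_nonpos_of_nonneg hdm (by positivity)
      have hq1 : q ^ (m+1) = q * q ^ m := by ring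
      have h2q : 2 * q ^ m ≤ q * q ^ m := mul_le_mul_of_nonneg_right hq (by positivity)
      rw [hq1]; linarith [habs.2]
    refine ⟨by rw [abs_of_nonpos (by linarith)]; linarith, ?_⟩
    rw [h1, show Int.sign (-1) = -1 by decide, Int.sign_eq_neg_one_iff_neg]
    linarith
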